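/- Let p : Σ* → ℝ be a USSF with dim p ≤ 2. Then p is associated with an unconstrained hidden Markov process on some finite number of hidden states. -/

import Mathlib

open Matrix

/-- The column `p^w` of the Hankel matrix of `p`, as a function `v ↦ p(wv)`. -/
def hankelCol {A : Type*} (p : List A → ℝ) (w : List A) : List A → ℝ :=
  fun v => p (w ++ v)

/-- The dimension of a string function: the rank of its Hankel matrix. -/
noncomputable def sfDim {A : Type*} (p : List A → ℝ) : Cardinal :=
  Module.rank ℝ ↥(Submodule.span ℝ (Set.range (hankelCol p)))

/-- For `v = a₁…aₙ`, the product `T_{aₙ} ⋯ T_{a₁}`. -/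
def wordProd {A R : Type*} [Semiring R] {d : ℕ}
    (T : A → Matrix (Fin d) (Fin d) R) (v : List A) : Matrix (Fin d) (Fin d) R :=
  (v.reverse.map T).prod

/-- `p` is associated with an unconstrained hidden Markov process on `l` hidden states. -/
def IsHMM {A : Type*} [Fintype A] (l : ℕ) (p : List A → ℝ) : Prop :=
  ∃ (Am : Matrix (Fin l) (Fin l) ℝ) (E : Fin l → A → ℝ) (π : Fin l → ℝ),
    (∀ i j, 0 ≤ Am i j) ∧ (∀ i, ∑ j, Am i j = 1) ∧
    (∀ i a, 0 ≤ E i a) ∧ (∀ i, ∑ a : A, E i a = 1) ∧ (∀ i, 0 ≤ π i) ∧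
    ∀ v : List A,
      p v = (fun _ => (1 : ℝ)) ⬝ᵥ
        (wordProd (fun a => Amᵀ * Matrix.diagonal fun i => E i a) v) *ᵥ π

section Aux

set_option linter.unusedSectionVars false

variable {A : Type*} [Fintype A]

lemma wordProd_nil {R : Type*} [Semiring R] {d : ℕ} (T : A → Matrix (Fin d) (Fin d) R) :
    wordProd T [] = 1 := rfl

lemma wordProd_cons {R : Type*} [Semiring R] {d : ℕ} (T : A → Matrix (Fin d) (Fin d) R)
    (a : A) (v : List A) : wordProd T (a :: v) = wordProd T v * T a := by
  simp [wordProd]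

lemma wordProd_concat {R : Type*} [Semiring R] {d : ℕ} (T : A → Matrix (Fin d) (Fin d) R)
    (a : A) (v : List A) : wordProd T (v ++ [a]) = T a * wordProd T v := by
  simp [wordProd]

/-- A nonnegative quasi-realization whose total operator preserves the all-ones functional. -/
def QuasiReal (p : List A → ℝ) : Prop :=
  ∃ (d : ℕ) (T : A → Matrix (Fin d) (Fin d) ℝ) (π : Fin d → ℝ),
    (∀ a i j, 0 ≤ T a i j) ∧ (∀ i, 0 ≤ π i) ∧
    (∀ j, ∑ a : A, ∑ i, T a i j = 1) ∧
    (∀ v, p v = (fun _ => (1:ℝ)) ⬝ᵥ (wordProd T v) *ᵥ π)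

lemma quasi_isHMM (p : List A → ℝ) (h : QuasiReal p) : ∃ l, IsHMM l p := by
  obtain ⟨d, T, π, hT, hπ, hcol, hp⟩ := h
  classical
  let σ : Fin (d * Fintype.card A) ≃ Fin d × A :=
    finProdFinEquiv.symm.trans (Equiv.prodCongr (Equiv.refl _) (Fintype.equivFin A).symm)
  refine ⟨d * Fintype.card A, ?_⟩
  refine ⟨fun x y => T (σ y).2 (σ y).1 (σ x).1,
    fun x c => if (σ x).2 = c then 1 else 0,
    fun x => (T (σ x).2 *ᵥ π) (σ x).1, ?_, ?_, ?_, ?_, ?_, ?_⟩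
  · intro i j; exact hT _ _ _
  · intro i
    show ∑ y, T (σ y).2 (σ y).1 (σ i).1 = 1
    rw [← Equiv.sum_comp σ.symm (fun y => T (σ y).2 (σ y).1 (σ i).1)]
    simp only [Equiv.apply_symm_apply]
    rw [Fintype.sum_prod_type, Finset.sum_comm]
    exact hcol (σ i).1
  · intro i a; dsimp only; split <;> norm_num
  · intro i; simp
  · intro i
    show 0 ≤ ∑ j, T (σ i).2 (σ i).1 j * π j
    exact Finset.sum_nonneg fun j _ => mul_nonneg (hT _ _ _) (hπ _)
  · -- main formula
    intro v
    set T' : A → Matrix (Fin (d * Fintype.card A)) (Fin (d * Fintype.card A)) ℝ :=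
      fun a => (fun x y => T (σ y).2 (σ y).1 (σ x).1)ᵀ *
        Matrix.diagonal (fun x => if (σ x).2 = a then (1:ℝ) else 0) with hT'
    have hT'entry : ∀ a x y, T' a x y
        = T (σ x).2 (σ x).1 (σ y).1 * (if (σ y).2 = a then 1 else 0) := by
      intro a x y
      simp [hT', Matrix.mul_diagonal, Matrix.transpose_apply]
      rfl
    set lift : (Fin d → ℝ) → (Fin (d * Fintype.card A) → ℝ) :=
      fun z x => (T (σ x).2 *ᵥ z) (σ x).1 with hlift
    have step : ∀ a z, T' a *ᵥ lift z = lift (T a *ᵥ z) := by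
      intro a z
      funext x
      show ∑ y, T' a x y * lift z y = _
      rw [← Equiv.sum_comp σ.symm (fun y => T' a x y * lift z y)]
      rw [Fintype.sum_prod_type]
      have key : ∀ j b, T' a x (σ.symm (j, b)) * lift z (σ.symm (j, b))
          = T (σ x).2 (σ x).1 j * ((if b = a then (1:ℝ) else 0) * (T b *ᵥ z) j) := by
        intro j b
        rw [hT'entry]
        simp [hlift, Equiv.apply_symm_apply, mul_assoc]
      simp only [key]
      simp only [ite_mul, one_mul, zero_mul, mul_ite, mul_zero]
      rw [Finset.sum_comm]
      simp [Finset.sum_ite_eq', hlift, Matrix.mulVec_mulVec, Matrix.mul_apply,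
        Matrix.mulVec, dotProduct, Finset.mul_sum]
    have main : ∀ (v : List A) (z : Fin d → ℝ),
        wordProd T' v *ᵥ lift z = lift (wordProd T v *ᵥ z) := by
      intro v
      induction v with
      | nil => intro z; simp [wordProd_nil, Matrix.one_mulVec]
      | cons a v ih =>
        intro z
        rw [wordProd_cons, wordProd_cons]
        calc (wordProd T' v * T' a) *ᵥ lift z
            = wordProd T' v *ᵥ (T' a *ᵥ lift z) := by rw [Matrix.mulVec_mulVec]
          _ = lift (wordProd T v *ᵥ (T a *ᵥ z)) := by rw [step, ih]
          _ = lift ((wordProd T v * T a) *ᵥ z) := by rw [Matrix.mulVec_mulVec]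
    have lift_sum : ∀ z : Fin d → ℝ,
        (fun _ => (1:ℝ)) ⬝ᵥ lift z = (fun _ => (1:ℝ)) ⬝ᵥ z := by
      intro z
      show ∑ x, 1 * lift z x = ∑ i, 1 * z i
      rw [← Equiv.sum_comp σ.symm (fun x => 1 * lift z x), Fintype.sum_prod_type]
      simp only [hlift, one_mul, Equiv.apply_symm_apply, Matrix.mulVec, dotProduct]
      calc ∑ y : Fin d, ∑ b : A, ∑ j : Fin d, T b y j * z j
          = ∑ b : A, ∑ y : Fin d, ∑ j : Fin d, T b y j * z j := Finset.sum_comm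
        _ = ∑ b : A, ∑ j : Fin d, ∑ y : Fin d, T b y j * z j :=
            Finset.sum_congr rfl fun b _ => Finset.sum_comm
        _ = ∑ j : Fin d, ∑ b : A, ∑ y : Fin d, T b y j * z j := Finset.sum_comm
        _ = ∑ j : Fin d, (∑ b : A, ∑ y : Fin d, T b y j) * z j := by
            simp [Finset.sum_mul]
        _ = ∑ j : Fin d, z j := by
            refine Finset.sum_congr rfl fun j _ => ?_
            rw [hcol j, one_mul]
    have hπ' : (fun x => (T (σ x).2 *ᵥ π) (σ x).1) = lift π := rfl
    rw [hπ', main, lift_sum, hp]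

lemma hankel_span_sum (p : List A → ℝ)
    (hsum : ∀ v, ∑ a : A, p (v ++ [a]) = p v)
    {f : List A → ℝ} (hf : f ∈ Submodule.span ℝ (Set.range (hankelCol p))) :
    ∀ v, ∑ a : A, f (v ++ [a]) = f v := by
  induction hf using Submodule.span_induction with
  | mem x hx =>
    obtain ⟨w, rfl⟩ := hx
    intro v
    simp only [hankelCol, ← List.append_assoc]
    exact hsum _
  | zero => intro v; simp
  | add x y _ _ hx hy =>
    intro v
    simp only [Pi.add_apply, Finset.sum_add_distrib, hx v, hy v]
  | smul c x _ hx =>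
    intro v
    simp only [Pi.smul_apply, smul_eq_mul, ← Finset.mul_sum, hx v]

lemma vanish (f : List A → ℝ) (hnn : ∀ v, 0 ≤ f v)
    (hs : ∀ v, ∑ a : A, f (v ++ [a]) = f v) (h0 : f [] = 0) :
    ∀ v, f v = 0 := by
  intro v
  induction v using List.reverseRecOn with
  | nil => exact h0
  | append_singleton l a ih =>
    have hsum0 : ∑ b : A, f (l ++ [b]) = 0 := by rw [hs l, ih]
    have := (Finset.sum_eq_zero_iff_of_nonneg (fun b _ => hnn (l ++ [b]))).mp hsum0
    exact this a (Finset.mem_univ a)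


end Aux

/-- Every USSF of dimension at most `2` is associated with an
unconstrained hidden Markov process on some finite number of hidden states. -/
theorem stmt12 {A : Type*} [Fintype A] [Nonempty A] (p : List A → ℝ)
    (hpos : ∀ v : List A, 0 ≤ p v)
    (hsum : ∀ v : List A, ∑ a : A, p (v ++ [a]) = p v)
    (hdim : sfDim p ≤ 2) :
    ∃ l : ℕ, IsHMM l p := by
  classical
  apply quasi_isHMM
  set V := Submodule.span ℝ (Set.range (hankelCol p)) with hVdef
  have hpV : p ∈ V := Submodule.subset_span ⟨[], rfl⟩
  rcases eq_or_lt_of_le (hpos []) with hP0 | hP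
  · -- p is identically zero
    have hp0 : ∀ v, p v = 0 := vanish p hpos hsum hP0.symm
    refine ⟨0, fun _ => 0, Fin.elim0, fun a i => i.elim0, fun i => i.elim0,
      fun j => j.elim0, ?_⟩
    intro v
    rw [hp0 v]
    simp [dotProduct]
  by_cases h1 : ∀ w, hankelCol p w ∈ Submodule.span ℝ {p}
  · -- dimension one case
    set lam : A → ℝ := fun a => p [a] / p [] with hlam
    have key : ∀ a v, p (a :: v) = lam a * p v := by
      intro a v
      obtain ⟨c, hc⟩ := Submodule.mem_span_singleton.mp (h1 [a])
      have hc' : ∀ x, p ([a] ++ x) = c * p x := by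
        intro x
        have := congrFun hc x
        simpa [hankelCol] using this.symm
      have hcval : c = lam a := by
        have h := hc' []
        simp at h
        rw [hlam]
        dsimp only
        rw [h]
        field_simp
      have := hc' v
      rw [hcval] at this
      simpa using this
    have hlamnn : ∀ a, 0 ≤ lam a := fun a => div_nonneg (hpos _) (hpos _)
    have hlamsum : ∑ a : A, lam a = 1 := by
      rw [hlam]
      rw [← Finset.sum_div]
      rw [show ∑ a : A, p [a] = p [] from hsum []]
      field_simp
    refine ⟨1, fun a => fun _ _ => lam a, fun _ => p [], fun a i j => hlamnn a,
      fun i => hpos [], ?_, ?_⟩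
    · intro j; simpa using hlamsum
    · intro v
      have claim : ∀ v : List A, wordProd (fun a => (fun _ _ => lam a :
          Matrix (Fin 1) (Fin 1) ℝ)) v 0 0 = p v / p [] := by
        intro w
        induction w with
        | nil =>
          rw [wordProd_nil (fun a => (fun _ _ => lam a : Matrix (Fin 1) (Fin 1) ℝ))]
          simp [Matrix.one_apply, div_self hP.ne']
        | cons a w ih =>
          rw [wordProd_cons (fun a => (fun _ _ => lam a : Matrix (Fin 1) (Fin 1) ℝ)) a w,
            Matrix.mul_apply (M := wordProd (fun a => (fun _ _ => lam a :
              Matrix (Fin 1) (Fin 1) ℝ)) w) (N := (fun _ _ => lam a : Matrix (Fin 1) (Fin 1) ℝ)),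
            Fin.sum_univ_one, ih, key a w]
          ring
      simp only [dotProduct, Matrix.mulVec, Fin.sum_univ_one, one_mul, claim v]
      field_simp
  · -- dimension two case
    push_neg at h1
    obtain ⟨w₀, hw₀⟩ := h1
    set g0 : List A → ℝ := hankelCol p w₀ with hg0def
    have hg0V : g0 ∈ V := Submodule.subset_span ⟨w₀, rfl⟩
    have hg0nn : ∀ v, 0 ≤ g0 v := fun v => hpos _
    have hPne : p [] ≠ 0 := hP.ne'
    set c0 : ℝ := g0 [] / p [] with hc0def
    set u : List A → ℝ := fun v => g0 v - c0 * p v with hudef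
    have huapp : ∀ v, u v = g0 v - c0 * p v := fun v => rfl
    have huV : u ∈ V := by
      have h : u = g0 - c0 • p := by funext v; simp [hudef]
      rw [h]
      exact Submodule.sub_mem V hg0V (Submodule.smul_mem V c0 hpV)
    have hu0 : u [] = 0 := by
      rw [huapp, hc0def]
      field_simp
      ring
    have husum : ∀ v, ∑ a : A, u (v ++ [a]) = u v := hankel_span_sum p hsum huV
    have hvm : ∃ vm, u vm < 0 := by
      by_contra hcon
      push_neg at hcon
      have hz := vanish u hcon husum hu0
      apply hw₀
      rw [Submodule.mem_span_singleton]
      refine ⟨c0, ?_⟩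
      funext v
      have := hz v
      rw [huapp] at this
      simp only [Pi.smul_apply, smul_eq_mul]
      linarith
    have hvp : ∃ vp, 0 < u vp := by
      by_contra hcon
      push_neg at hcon
      have hz := vanish (-u) (fun v => by simpa using hcon v)
        (fun v => by simpa using congrArg Neg.neg (husum v)) (by simp [hu0])
      apply hw₀
      rw [Submodule.mem_span_singleton]
      refine ⟨c0, ?_⟩
      funext v
      have := hz v
      simp only [Pi.neg_apply, neg_eq_zero] at this
      rw [huapp] at this
      simp only [Pi.smul_apply, smul_eq_mul]
      linarith
    obtain ⟨vm, hvm⟩ := hvm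
    obtain ⟨vp, hvp⟩ := hvp
    set K : Set ℝ := {t | ∀ v, 0 ≤ p v + t * u v} with hKdef
    have h0K : (0:ℝ) ∈ K := fun v => by simpa using hpos v
    have hKne : K.Nonempty := ⟨0, h0K⟩
    have hKub : ∀ t ∈ K, t ≤ p vm / (-u vm) := by
      intro t ht
      rw [le_div_iff₀ (by linarith)]
      have := ht vm
      nlinarith
    have hKlb : ∀ t ∈ K, -(p vp / u vp) ≤ t := by
      intro t ht
      rw [neg_le, le_div_iff₀ hvp]
      have := ht vp
      nlinarith
    have hKbdd : BddAbove K := ⟨_, fun t ht => hKub t ht⟩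
    have hKbddb : BddBelow K := ⟨_, fun t ht => hKlb t ht⟩
    set t1 : ℝ := sInf K with ht1def
    set t2 : ℝ := sSup K with ht2def
    have ht10 : t1 ≤ 0 := csInf_le hKbddb h0K
    have ht20 : 0 ≤ t2 := le_csSup hKbdd h0K
    have ht1K : t1 ∈ K := by
      intro v
      rcases le_or_gt 0 (u v) with huv | huv
      · rcases eq_or_lt_of_le huv with h | h
        · rw [← h]; simpa using hpos v
        · have hb : ∀ t ∈ K, -(p v / u v) ≤ t := by
            intro t ht
            rw [neg_le, le_div_iff₀ h]
            have := ht v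
            nlinarith
          have hle : -(p v / u v) ≤ t1 := le_csInf hKne hb
          have h2 : -(p v / u v) * u v ≤ t1 * u v :=
            mul_le_mul_of_nonneg_right hle h.le
          have h3 : -(p v / u v) * u v = -(p v) := by field_simp
          have h4 : -(p v) ≤ t1 * u v := by rw [← h3]; exact h2
          linarith
      · have hub2 : t1 ≤ p v / (-u v) := le_trans ht10 (div_nonneg (hpos v) (by linarith))
        have h2 : t1 * (-u v) ≤ p v := (le_div_iff₀ (by linarith)).mp hub2
        rw [mul_neg] at h2
        linarith
    have ht2K : t2 ∈ K := by
      intro v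
      rcases le_or_gt 0 (u v) with huv | huv
      · exact add_nonneg (hpos v) (mul_nonneg ht20 huv)
      · have hub2 : t2 ≤ p v / (-u v) := by
          apply csSup_le hKne
          intro t ht
          rw [le_div_iff₀ (by linarith)]
          have := ht v
          nlinarith
        have h2 : t2 * (-u v) ≤ p v := (le_div_iff₀ (by linarith)).mp hub2
        rw [mul_neg] at h2
        linarith
    have hpw0 : 0 < g0 [] := by
      rcases eq_or_lt_of_le (hg0nn []) with h | h
      · exfalso
        apply hw₀
        have hz := vanish g0 hg0nn (hankel_span_sum p hsum hg0V) h.symm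
        rw [Submodule.mem_span_singleton]
        exact ⟨0, by funext v; simp [hz v]⟩
      · exact h
    have hc0pos : 0 < c0 := div_pos hpw0 hP
    have ht0K : (1/c0) ∈ K := by
      intro v
      have h : p v + 1/c0 * u v = g0 v / c0 := by
        rw [huapp]
        field_simp
        ring
      rw [h]
      exact div_nonneg (hg0nn v) hc0pos.le
    have ht2pos : 0 < t2 := lt_of_lt_of_le (by positivity) (le_csSup hKbdd ht0K)
    have ht12 : t1 < t2 := lt_of_le_of_lt ht10 ht2pos
    have h12ne : t2 - t1 ≠ 0 := sub_ne_zero.mpr (ne_of_gt ht12)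
    set G1 : List A → ℝ := fun v => (p v + t1 * u v) / p [] with hG1def
    set G2 : List A → ℝ := fun v => (p v + t2 * u v) / p [] with hG2def
    have hG1nn : ∀ v, 0 ≤ G1 v := fun v => div_nonneg (ht1K v) hP.le
    have hG2nn : ∀ v, 0 ≤ G2 v := fun v => div_nonneg (ht2K v) hP.le
    have hG1e : G1 [] = 1 := by
      show (p [] + t1 * u []) / p [] = 1
      rw [hu0]
      field_simp
      ring
    have hG2e : G2 [] = 1 := by
      show (p [] + t2 * u []) / p [] = 1
      rw [hu0]
      field_simp
      ring
    have hG1V : G1 ∈ V := by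
      have h : G1 = (p [])⁻¹ • p + (t1 / p []) • u := by
        funext v
        simp only [Pi.add_apply, Pi.smul_apply, smul_eq_mul]
        show (p v + t1 * u v) / p [] = _
        field_simp
        try ring
      rw [h]
      exact Submodule.add_mem V (Submodule.smul_mem V _ hpV) (Submodule.smul_mem V _ huV)
    have hG2V : G2 ∈ V := by
      have h : G2 = (p [])⁻¹ • p + (t2 / p []) • u := by
        funext v
        simp only [Pi.add_apply, Pi.smul_apply, smul_eq_mul]
        show (p v + t2 * u v) / p [] = _
        field_simp
        try ring
      rw [h]
      exact Submodule.add_mem V (Submodule.smul_mem V _ hpV) (Submodule.smul_mem V _ huV)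
    -- every element of V is a combination of p and u
    have hrep : ∀ f ∈ V, ∃ a b : ℝ, ∀ v, f v = a * p v + b * u v := by
      have hrank : Module.rank ℝ ↥V ≤ 2 := hdim
      have hfd : FiniteDimensional ℝ V :=
        IsNoetherian.iff_fg.1 (IsNoetherian.iff_rank_lt_aleph0.2
          (lt_of_le_of_lt hrank (by exact_mod_cast Cardinal.nat_lt_aleph0 2)))
      have hli : LinearIndependent ℝ ![g0, p] := by
        rw [linearIndependent_fin2]
        constructor
        · change p ≠ 0
          intro h
          rw [h] at hP
          simp at hP
        · intro c hc
          apply hw₀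
          rw [Submodule.mem_span_singleton]
          exact ⟨c, by simpa using hc⟩
      set W : Submodule ℝ (List A → ℝ) := Submodule.span ℝ (Set.range ![g0, p]) with hWdef
      have hWV : W ≤ V := by
        rw [hWdef, Submodule.span_le]
        rintro x ⟨i, rfl⟩
        fin_cases i
        · exact hg0V
        · exact hpV
      have hWfr : Module.finrank ℝ W = 2 := by
        rw [hWdef, finrank_span_eq_card hli]
        simp
      have hVW : W = V := by
        apply Submodule.eq_of_le_of_finrank_le hWV
        rw [hWfr]
        exact Module.finrank_le_of_rank_le hrank
      intro f hf
      rw [← hVW] at hf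
      obtain ⟨c, hc⟩ := (Submodule.mem_span_range_iff_exists_fun ℝ).mp hf
      refine ⟨c 0 * c0 + c 1, c 0, ?_⟩
      intro v
      have := congrFun hc v
      simp only [Fin.sum_univ_two, Pi.add_apply, Pi.smul_apply, smul_eq_mul,
        Matrix.cons_val_zero, Matrix.cons_val_one, Matrix.head_cons] at this
      rw [← this, huapp]
      ring
    -- decomposition into the cone spanned by G1 and G2
    have hdecomp : ∀ f ∈ V, (∀ v, 0 ≤ f v) →
        ∃ α β : ℝ, 0 ≤ α ∧ 0 ≤ β ∧ ∀ v, f v = α * G1 v + β * G2 v := by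
      intro f hf hfnn
      obtain ⟨a, b, hab⟩ := hrep f hf
      have haP : f [] = a * p [] := by rw [hab [], hu0]; ring
      have ha : 0 ≤ a := by
        have h := hfnn []
        rw [haP] at h
        exact le_of_mul_le_mul_right (by linarith) hP
      rcases eq_or_lt_of_le ha with ha0 | hapos
      · have hb : b = 0 := by
          rcases lt_trichotomy b 0 with h | h | h
          · exfalso
            have h1 := hfnn vp
            rw [hab vp, ← ha0] at h1
            nlinarith
          · exact h
          · exfalso
            have h1 := hfnn vm
            rw [hab vm, ← ha0] at h1
            nlinarith
        refine ⟨0, 0, le_refl _, le_refl _, ?_⟩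
        intro v
        rw [hab v, ← ha0, hb]
        ring
      · set t : ℝ := b / a with htdef
        have htK : t ∈ K := by
          intro v
          have h := hfnn v
          rw [hab v] at h
          have heq : p v + t * u v = (a * p v + b * u v) / a := by
            rw [htdef]
            field_simp
          rw [heq]
          exact div_nonneg h hapos.le
        have hta : t1 ≤ t := csInf_le hKbddb htK
        have htb : t ≤ t2 := le_csSup hKbdd htK
        set lam : ℝ := (t2 - t) / (t2 - t1) with hlamdef
        have hlam0 : 0 ≤ lam := div_nonneg (by linarith) (by linarith)
        have hlam1 : lam ≤ 1 := by
          rw [hlamdef, div_le_one (by linarith)]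
          linarith
        refine ⟨a * lam * p [], a * (1 - lam) * p [], ?_, ?_, ?_⟩
        · positivity
        · have : 0 ≤ 1 - lam := by linarith
          positivity
        · intro v
          rw [hab v]
          show a * p v + b * u v = a * lam * p [] * ((p v + t1 * u v) / p []) +
            a * (1 - lam) * p [] * ((p v + t2 * u v) / p [])
          rw [hlamdef, htdef]
          field_simp
          ring
    -- shifts of the generators stay in V
    have hshift : ∀ (a : A) (t : ℝ),
        (fun v => (p (a :: v) + t * u (a :: v)) / p []) ∈ V := by
      intro a t
      have e2 : (fun v => g0 (a :: v)) = hankelCol p (w₀ ++ [a]) := by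
        funext v
        show p (w₀ ++ (a :: v)) = p ((w₀ ++ [a]) ++ v)
        rw [List.append_assoc]
        rfl
      have h : (fun v => (p (a :: v) + t * u (a :: v)) / p []) =
          ((1 - t * c0) / p []) • hankelCol p [a] + (t / p []) • hankelCol p (w₀ ++ [a]) := by
        funext v
        simp only [Pi.add_apply, Pi.smul_apply, smul_eq_mul]
        rw [← e2, huapp]
        show (p (a :: v) + t * (g0 (a :: v) - c0 * p (a :: v))) / p [] =
          (1 - t * c0) / p [] * p (a :: v) + t / p [] * g0 (a :: v)
        field_simp
        ring
      rw [h]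
      exact Submodule.add_mem V
        (Submodule.smul_mem V _ (Submodule.subset_span ⟨[a], rfl⟩))
        (Submodule.smul_mem V _ (Submodule.subset_span ⟨w₀ ++ [a], rfl⟩))
    have HB : ∀ a : A, ∃ B : Matrix (Fin 2) (Fin 2) ℝ,
        (∀ i j, 0 ≤ B i j) ∧
        (∀ v, G1 (a :: v) = B 0 0 * G1 v + B 1 0 * G2 v) ∧
        (∀ v, G2 (a :: v) = B 0 1 * G1 v + B 1 1 * G2 v) := by
      intro a
      obtain ⟨α1, β1, hα1, hβ1, h1'⟩ := hdecomp _ (hshift a t1) (fun v => hG1nn (a :: v))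
      obtain ⟨α2, β2, hα2, hβ2, h2'⟩ := hdecomp _ (hshift a t2) (fun v => hG2nn (a :: v))
      refine ⟨![![α1, α2], ![β1, β2]], ?_, ?_, ?_⟩
      · intro i j
        fin_cases i <;> fin_cases j <;> simpa
      · intro v
        simpa using h1' v
      · intro v
        simpa using h2' v
    choose T hTnn hTG1 hTG2 using HB
    obtain ⟨pi1, pi2, hpi1, hpi2, hpirep⟩ := hdecomp p hpV hpos
    refine ⟨2, T, ![pi1, pi2], hTnn, ?_, ?_, ?_⟩
    · intro i
      fin_cases i <;> simpa
    · intro j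
      have hGsum : ∀ G : List A → ℝ, G ∈ V → G [] = 1 → ∑ a : A, G [a] = 1 := by
        intro G hGV hGe
        have := hankel_span_sum p hsum hGV []
        simpa [hGe] using this
      fin_cases j
      · have h := hGsum G1 hG1V hG1e
        calc ∑ a : A, ∑ i : Fin 2, T a i 0 = ∑ a : A, (T a 0 0 + T a 1 0) := by
              refine Finset.sum_congr rfl fun a _ => ?_
              simp [Fin.sum_univ_two]
          _ = ∑ a : A, G1 [a] := by
              refine Finset.sum_congr rfl fun a _ => ?_
              have := hTG1 a []
              rw [hG1e, hG2e] at this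
              simpa using this.symm
          _ = 1 := h
      · have h := hGsum G2 hG2V hG2e
        calc ∑ a : A, ∑ i : Fin 2, T a i 1 = ∑ a : A, (T a 0 1 + T a 1 1) := by
              refine Finset.sum_congr rfl fun a _ => ?_
              simp [Fin.sum_univ_two]
          _ = ∑ a : A, G2 [a] := by
              refine Finset.sum_congr rfl fun a _ => ?_
              have := hTG2 a []
              rw [hG1e, hG2e] at this
              simpa using this.symm
          _ = 1 := h
    · -- the realization formula
      have claim : ∀ (v y : List A), p (v ++ y) =
          (wordProd T v *ᵥ ![pi1, pi2]) 0 * G1 y + (wordProd T v *ᵥ ![pi1, pi2]) 1 * G2 y := by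
        intro v
        induction v using List.reverseRecOn with
        | nil =>
          intro y
          simp only [List.nil_append, wordProd_nil, Matrix.one_mulVec]
          simpa using hpirep y
        | append_singleton l a ih =>
          intro y
          have hl : (l ++ [a]) ++ y = l ++ (a :: y) := by simp
          rw [hl, ih (a :: y)]
          rw [wordProd_concat, ← Matrix.mulVec_mulVec]
          set c : Fin 2 → ℝ := wordProd T l *ᵥ ![pi1, pi2] with hcdef
          have hm0 : (T a *ᵥ c) 0 = T a 0 0 * c 0 + T a 0 1 * c 1 := by
            simp [Matrix.mulVec, dotProduct, Fin.sum_univ_two]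
          have hm1 : (T a *ᵥ c) 1 = T a 1 0 * c 0 + T a 1 1 * c 1 := by
            simp [Matrix.mulVec, dotProduct, Fin.sum_univ_two]
          rw [hm0, hm1, hTG1 a y, hTG2 a y]
          ring
      intro v
      have h := claim v []
      rw [List.append_nil, hG1e, hG2e] at h
      rw [h]
      simp [dotProduct, Fin.sum_univ_two]
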